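/- Let ε be a real number with 0 ≤ ε < 1/10, and let x_u, c₁, c₂, v, w ∈ [0, 1] satisfy: |c₁ − 3/10| ≤ ε; |c₂ − 7/10| ≤ ε; if x_u < c₁ − ε then v ≤ ε, and if x_u > c₁ + ε then v ≥ 1 − ε; if x_u < c₂ − ε then w ≤ ε, and if x_u > c₂ + ε then w ≥ 1 − ε. Then: (1) if x_u ≤ ε then v ≤ ε and w ≤ ε; (2) if x_u ≥ 1 − ε then v ≥ 1 − ε and w ≥ 1 − ε; (3) if x_u ≤ 1/2 then w ≤ ε; and (4) if x_u ≥ 1/2 then v ≥ 1 − ε. In particular, for every x_u at least one of v, w lies in [0, ε] ∪ [1 − ε, 1]. -/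
import Mathlib


/-- Correctness of the generalized-circuit simulation of a Pure-Circuit
PURIFY gate via the comparison gadgets `x_u > 0.3` and `x_u > 0.7`, for every
`ε < 1/10`. -/
theorem gcircuit_purify_gadget (ε xu c1 c2 v w : ℝ)
    (hε0 : 0 ≤ ε) (hε1 : ε < 1 / 10)
    (hxu : xu ∈ Set.Icc (0:ℝ) 1)
    (hc1 : c1 ∈ Set.Icc (0:ℝ) 1) (hc2 : c2 ∈ Set.Icc (0:ℝ) 1)
    (hv : v ∈ Set.Icc (0:ℝ) 1) (hw : w ∈ Set.Icc (0:ℝ) 1)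
    (hconst1 : |c1 - 3 / 10| ≤ ε) (hconst2 : |c2 - 7 / 10| ≤ ε)
    (hv1 : xu < c1 - ε → v ≤ ε) (hv2 : xu > c1 + ε → 1 - ε ≤ v)
    (hw1 : xu < c2 - ε → w ≤ ε) (hw2 : xu > c2 + ε → 1 - ε ≤ w) :
    (xu ≤ ε → v ≤ ε ∧ w ≤ ε) ∧
    (1 - ε ≤ xu → 1 - ε ≤ v ∧ 1 - ε ≤ w) ∧
    (xu ≤ 1 / 2 → w ≤ ε) ∧
    (1 / 2 ≤ xu → 1 - ε ≤ v) ∧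
    (v ∈ Set.Icc (0:ℝ) ε ∪ Set.Icc (1 - ε) 1 ∨
      w ∈ Set.Icc (0:ℝ) ε ∪ Set.Icc (1 - ε) 1) := by
  obtain ⟨h1a, h1b⟩ := abs_le.mp hconst1
  obtain ⟨h2a, h2b⟩ := abs_le.mp hconst2
  obtain ⟨hv0, hv1'⟩ := hv
  obtain ⟨hw0, hw1'⟩ := hw
  have p1 : xu ≤ ε → v ≤ ε ∧ w ≤ ε := fun h =>
    ⟨hv1 (by linarith), hw1 (by linarith)⟩
  have p2 : 1 - ε ≤ xu → 1 - ε ≤ v ∧ 1 - ε ≤ w := fun h =>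
    ⟨hv2 (by linarith), hw2 (by linarith)⟩
  have p3 : xu ≤ 1 / 2 → w ≤ ε := fun h => hw1 (by linarith)
  have p4 : 1 / 2 ≤ xu → 1 - ε ≤ v := fun h => hv2 (by linarith)
  refine ⟨p1, p2, p3, p4, ?_⟩
  rcases le_or_gt xu (1/2) with h | h
  · exact Or.inr (Or.inl ⟨hw0, p3 h⟩)
  · exact Or.inl (Or.inr ⟨p4 h.le, hv1'⟩)
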